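/- Define, for real p with p(p+4) > 0 and p ≠ 0, x(p) = ((p²+2p−2) + √(p³(p+4)))/(2√(p³(p+4))) and y₀(p) = ((p²+2p) + √(p³(p+4)))/(2√(p³(p+4))). Then dy₀/dx = −p/3, i.e., (dy₀/dp)/(dx/dp) = −p/3 wherever dx/dp ≠ 0. -/

import Mathlib

lemma stmt18_deriv (p a : ℝ) (hf : p ^ 3 * (p + 4) > 0) :
    HasDerivAt (fun q : ℝ =>
        ((q ^ 2 + 2 * q + a) + Real.sqrt (q ^ 3 * (q + 4)))
          / (2 * Real.sqrt (q ^ 3 * (q + 4))))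
      (((2 * p + 2 + (4 * p ^ 3 + 12 * p ^ 2) / (2 * Real.sqrt (p ^ 3 * (p + 4)))) *
          (2 * Real.sqrt (p ^ 3 * (p + 4))) -
        ((p ^ 2 + 2 * p + a) + Real.sqrt (p ^ 3 * (p + 4))) *
          (2 * ((4 * p ^ 3 + 12 * p ^ 2) / (2 * Real.sqrt (p ^ 3 * (p + 4)))))) /
        (2 * Real.sqrt (p ^ 3 * (p + 4))) ^ 2) p := by
  have hs : 0 < Real.sqrt (p ^ 3 * (p + 4)) := Real.sqrt_pos.mpr hf
  have hfd : HasDerivAt (fun q : ℝ => q ^ 3 * (q + 4)) (4 * p ^ 3 + 12 * p ^ 2) p := by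
    have h : HasDerivAt (fun q : ℝ => q ^ 3 * (q + 4)) _ p := (hasDerivAt_pow 3 p).mul ((hasDerivAt_id p).add_const 4)
    convert h using 1
    simp
    ring
  have hsd : HasDerivAt (fun q : ℝ => Real.sqrt (q ^ 3 * (q + 4)))
      ((4 * p ^ 3 + 12 * p ^ 2) / (2 * Real.sqrt (p ^ 3 * (p + 4)))) p :=
    hfd.sqrt hf.ne'
  have hA : HasDerivAt (fun q : ℝ => q ^ 2 + 2 * q + a) (2 * p + 2) p := by
    have h : HasDerivAt (fun q : ℝ => q ^ 2 + 2 * q + a) _ p := ((hasDerivAt_pow 2 p).add ((hasDerivAt_id p).const_mul 2)).add_const a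
    convert h using 1
    ring
  exact (hA.add hsd).div (hsd.const_mul 2) (by positivity)

theorem stmt18 (p : ℝ) (h1 : p * (p + 4) > 0) (h2 : p ≠ 0)
    (hx : deriv (fun q : ℝ =>
        ((q ^ 2 + 2 * q - 2) + Real.sqrt (q ^ 3 * (q + 4)))
          / (2 * Real.sqrt (q ^ 3 * (q + 4)))) p ≠ 0) :
    deriv (fun q : ℝ =>
        ((q ^ 2 + 2 * q) + Real.sqrt (q ^ 3 * (q + 4)))
          / (2 * Real.sqrt (q ^ 3 * (q + 4)))) p
      / deriv (fun q : ℝ =>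
        ((q ^ 2 + 2 * q - 2) + Real.sqrt (q ^ 3 * (q + 4)))
          / (2 * Real.sqrt (q ^ 3 * (q + 4)))) p
      = -p / 3 := by
  have hp2 : (0:ℝ) < p ^ 2 := by positivity
  have hf : p ^ 3 * (p + 4) > 0 := by nlinarith
  set s := Real.sqrt (p ^ 3 * (p + 4)) with hs_def
  have hs : 0 < s := Real.sqrt_pos.mpr hf
  have hs2 : s ^ 2 = p ^ 3 * (p + 4) := Real.sq_sqrt hf.le
  have hdx := stmt18_deriv p (-2) hf
  have hdy := stmt18_deriv p 0 hf
  have hdx' : deriv (fun q : ℝ =>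
      ((q ^ 2 + 2 * q - 2) + Real.sqrt (q ^ 3 * (q + 4)))
        / (2 * Real.sqrt (q ^ 3 * (q + 4)))) p = 6 * p ^ 2 / s ^ 3 := by
    have h : (fun q : ℝ => ((q ^ 2 + 2 * q - 2) + Real.sqrt (q ^ 3 * (q + 4)))
        / (2 * Real.sqrt (q ^ 3 * (q + 4)))) = (fun q : ℝ =>
        ((q ^ 2 + 2 * q + (-2)) + Real.sqrt (q ^ 3 * (q + 4)))
        / (2 * Real.sqrt (q ^ 3 * (q + 4)))) := by
      funext q; ring_nf
    rw [h, hdx.deriv]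
    rw [← hs_def]
    field_simp
    ring_nf
    rw [hs2]
    ring
  have hdy' : deriv (fun q : ℝ =>
      ((q ^ 2 + 2 * q) + Real.sqrt (q ^ 3 * (q + 4)))
        / (2 * Real.sqrt (q ^ 3 * (q + 4)))) p = -2 * p ^ 3 / s ^ 3 := by
    have h : (fun q : ℝ => ((q ^ 2 + 2 * q) + Real.sqrt (q ^ 3 * (q + 4)))
        / (2 * Real.sqrt (q ^ 3 * (q + 4)))) = (fun q : ℝ =>
        ((q ^ 2 + 2 * q + 0) + Real.sqrt (q ^ 3 * (q + 4)))
        / (2 * Real.sqrt (q ^ 3 * (q + 4)))) := by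
      funext q; ring_nf
    rw [h, hdy.deriv]
    rw [← hs_def]
    field_simp
    ring_nf
    rw [hs2]
    ring
  rw [hdx', hdy']
  field_simp
  ring
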